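/- Let α = 1 and β > 0, let φ be an analytic self-map of the open unit disk D, and let g be analytic on D. Then the operator C_φU_g, defined by (C_φU_g f)(z) = ∫₀^{φ(z)} f(ξ) g'(ξ) dξ, is bounded from Z^1 to Z^β if and only if (g'∘φ)·φ'' + (g''∘φ)·(φ')² ∈ H_{v_β}^∞ and sup_{z∈D} (1−|z|²)^β log(2/(1−|φ(z)|²)) |g'(φ(z))(φ'(z))²| < ∞. -/

import Mathlib

noncomputable section

/-- The open unit disk in the complex plane. -/
def uD : Set ℂ := Metric.ball 0 1

/-- The Zygmund-type quantity `(1-|z|^2)^a * |f''(z)|`. -/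
def zygS (a : ℝ) (f : ℂ → ℂ) (z : ℂ) : ℝ := (1 - ‖z‖ ^ 2) ^ a * ‖deriv (deriv f) z‖

/-- Membership in the Zygmund-type space `Z^a`. -/
def memZ (a : ℝ) (f : ℂ → ℂ) : Prop :=
  AnalyticOn ℂ f uD ∧ ∃ M : ℝ, ∀ z ∈ uD, zygS a f z ≤ M

/-- The Zygmund-type norm `‖f‖_{Z^a} = |f 0| + |f' 0| + sup_{z ∈ D} (1-|z|^2)^a |f''(z)|`. -/
def zNorm (a : ℝ) (f : ℂ → ℂ) : ℝ := ‖f 0‖ + ‖deriv f 0‖ + sSup (zygS a f '' uD)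

/-- Membership in the weighted space `H^∞_{v_b}` (for `u` analytic on `uD`). -/
def memHv (b : ℝ) (u : ℂ → ℂ) : Prop :=
  ∃ M : ℝ, ∀ z ∈ uD, (1 - ‖z‖ ^ 2) ^ b * ‖u z‖ ≤ M

/-- `T` is a bounded operator from `Z^a` to `Z^b`. -/
def boundedOp (a b : ℝ) (T : (ℂ → ℂ) → ℂ → ℂ) : Prop :=
  (∀ f, memZ a f → memZ b (T f)) ∧
    ∃ C > 0, ∀ f, memZ a f → zNorm b (T f) ≤ C * zNorm a f

/-- `(C_φ U_g f)(z) = ∫₀^{φ(z)} f(ξ) g'(ξ) dξ`, parametrized along the segment from `0` to `φ z`. -/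
def CphiUg (g φ : ℂ → ℂ) (f : ℂ → ℂ) : ℂ → ℂ :=
  fun z => ∫ t in (0:ℝ)..1, φ z * (f ((t : ℂ) * φ z) * deriv g ((t : ℂ) * φ z))

open Metric Set intervalIntegral MeasureTheory Filter
lemma uD_open : IsOpen uD := isOpen_ball
lemma mem_uD {z : ℂ} : z ∈ uD ↔ ‖z‖ < 1 := by simp [uD, mem_ball, dist_zero_right]
lemma smul_mem_uD {z : ℂ} (hz : z ∈ uD) {t : ℝ} (ht0 : 0 ≤ t) (ht1 : t ≤ 1) :
    (t:ℂ) * z ∈ uD := by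
  rw [mem_uD] at *
  calc ‖(t:ℂ) * z‖ = t * ‖z‖ := by
        rw [norm_mul, Complex.norm_real, Real.norm_eq_abs, abs_of_nonneg ht0]
    _ ≤ 1 * ‖z‖ := by gcongr
    _ < 1 := by simpa using hz
lemma closedBall_subset_uD {r : ℝ} (hr : r < 1) : Metric.closedBall (0:ℂ) r ⊆ uD := by
  intro x hx
  rw [Metric.mem_closedBall, dist_zero_right] at hx
  rw [mem_uD]; linarith

lemma zero_uD : (0:ℂ) ∈ uD := by simp [mem_uD]

lemma one_sub_sq_pos {z : ℂ} (hz : z ∈ uD) : 0 < 1 - ‖z‖^2 := by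
  have hz1 : ‖z‖ < 1 := mem_uD.mp hz
  nlinarith [norm_nonneg z]

lemma one_sub_mul_pos {t r : ℝ} (ht0 : 0 ≤ t) (ht1 : t ≤ 1) (hr0 : 0 ≤ r) (hr1 : r < 1) :
    0 < 1 - t*r := by nlinarith [mul_le_mul_of_nonneg_right ht1 hr0]

lemma my_norm_integral_le {f : ℝ → ℂ} {g : ℝ → ℝ}
    (h : ∀ t ∈ Set.Ioc (0:ℝ) 1, ‖f t‖ ≤ g t)
    (hg : IntervalIntegrable g MeasureTheory.volume 0 1)
    (hg0 : ∀ t ∈ Set.Icc (0:ℝ) 1, 0 ≤ g t) :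
    ‖∫ t in (0:ℝ)..1, f t‖ ≤ ∫ t in (0:ℝ)..1, g t := by
  have h1 := intervalIntegral.norm_integral_le_abs_of_norm_le
    ((MeasureTheory.ae_restrict_iff' measurableSet_uIoc).mpr
      (Filter.Eventually.of_forall (fun t ht =>
        h t (by rwa [Set.uIoc_of_le (zero_le_one' ℝ)] at ht)))) hg
  have h2 : |∫ t in (0:ℝ)..1, g t| = ∫ t in (0:ℝ)..1, g t :=
    abs_of_nonneg (intervalIntegral.integral_nonneg zero_le_one hg0)
  rw [h2] at h1
  exact h1

/-- Derivative of the star-shaped primitive `P u x = ∫_0^1 x * u (t x) dt`. -/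
lemma hasDerivAt_primitive {u : ℂ → ℂ} (hu : AnalyticOnNhd ℂ u uD) {ζ : ℂ} (hζ : ζ ∈ uD) :
    HasDerivAt (fun x : ℂ => ∫ t in (0:ℝ)..1, x * u ((t:ℂ) * x)) (u ζ) ζ := by
  have hcu : ContinuousOn u uD := hu.continuousOn
  have hu' : AnalyticOnNhd ℂ (deriv u) uD := hu.deriv
  have hcu' : ContinuousOn (deriv u) uD := hu'.continuousOn
  set r : ℝ := (1 + ‖ζ‖)/2 with hr
  have hζ1 : ‖ζ‖ < 1 := mem_uD.mp hζ
  have hr1 : r < 1 := by rw [hr]; linarith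
  have hKsub : Metric.closedBall (0:ℂ) r ⊆ uD := closedBall_subset_uD hr1
  set ε : ℝ := (1 - ‖ζ‖)/2 with hε
  have hεpos : 0 < ε := by rw [hε]; linarith
  have hballr : ∀ x ∈ ball ζ ε, ‖x‖ < r := by
    intro x hx
    rw [mem_ball] at hx
    calc ‖x‖ ≤ ‖x - ζ‖ + ‖ζ‖ := by simpa using norm_add_le (x - ζ) ζ
      _ < ε + ‖ζ‖ := by rw [← dist_eq_norm] at *; linarith [hx]
      _ = r := by rw [hε, hr]; ring
  have hball_uD : ball ζ ε ⊆ uD := fun x hx => mem_uD.mpr (lt_trans (hballr x hx) hr1)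
  -- bound constants on the compact ball
  obtain ⟨Cu, hCu⟩ : ∃ C, ∀ w ∈ Metric.closedBall (0:ℂ) r, ‖u w‖ ≤ C :=
    (isCompact_closedBall 0 r).exists_bound_of_continuousOn (hcu.mono hKsub)
  obtain ⟨Cu', hCu'⟩ : ∃ C, ∀ w ∈ Metric.closedBall (0:ℂ) r, ‖deriv u w‖ ≤ C :=
    (isCompact_closedBall 0 r).exists_bound_of_continuousOn (hcu'.mono hKsub)
  have htx_mem : ∀ (t : ℝ), t ∈ Set.Icc (0:ℝ) 1 → ∀ x ∈ ball ζ ε,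
      (t:ℂ) * x ∈ Metric.closedBall (0:ℂ) r := by
    intro t ht x hx
    rw [Metric.mem_closedBall, dist_zero_right]
    calc ‖(t:ℂ) * x‖ = t * ‖x‖ := by
          rw [norm_mul, Complex.norm_real, Real.norm_eq_abs, abs_of_nonneg ht.1]
      _ ≤ 1 * r := by
          have := hballr x hx
          have h0 : 0 ≤ ‖x‖ := norm_nonneg x
          nlinarith [ht.2, ht.1]
      _ = r := one_mul r
  have key := intervalIntegral.hasDerivAt_integral_of_dominated_loc_of_deriv_le
    (F := fun (x : ℂ) (t : ℝ) => x * u ((t:ℂ) * x))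
    (F' := fun (x : ℂ) (t : ℝ) => u ((t:ℂ) * x) + (t:ℂ) * x * deriv u ((t:ℂ) * x))
    (x₀ := ζ) (a := 0) (b := 1) (μ := volume) (bound := fun _ => Cu + Cu') (ball_mem_nhds ζ hεpos)
    ?_ ?_ ?_ ?_ ?_ ?_
  · -- conclusion
    have hI : (∫ t in (0:ℝ)..1,
        (u ((t:ℂ)*ζ) + (t:ℂ)*ζ*deriv u ((t:ℂ)*ζ))) = u ζ := by
      have hmem : ∀ t ∈ Set.uIcc (0:ℝ) 1, (t:ℂ)*ζ ∈ uD := by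
        intro t ht
        rw [Set.uIcc_of_le (zero_le_one' ℝ)] at ht
        exact smul_mem_uD hζ ht.1 ht.2
      have hder : ∀ t ∈ Set.uIcc (0:ℝ) 1, HasDerivAt (fun s : ℝ => (s:ℂ) * u ((s:ℂ)*ζ))
          (u ((t:ℂ)*ζ) + (t:ℂ)*ζ*deriv u ((t:ℂ)*ζ)) t := by
        intro t ht
        have hm := hmem t ht
        have hud : HasDerivAt u (deriv u ((t:ℂ)*ζ)) ((t:ℂ)*ζ) :=
          ((hu _ hm).differentiableAt).hasDerivAt
        have hinner : HasDerivAt (fun y : ℂ => y * ζ) ζ ((t:ℂ)) := by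
          simpa using (hasDerivAt_id ((t:ℂ))).mul_const ζ
        have hcomp : HasDerivAt (fun y : ℂ => u (y*ζ)) (deriv u ((t:ℂ)*ζ) * ζ) (t:ℂ) :=
          HasDerivAt.comp (t:ℂ) hud hinner
        have hprod := (hasDerivAt_id' ((t:ℂ))).mul hcomp
        have h5 := hprod.comp_ofReal
        refine h5.congr_deriv ?_
        ring
      have hint : IntervalIntegrable
          (fun t : ℝ => u ((t:ℂ)*ζ) + (t:ℂ)*ζ*deriv u ((t:ℂ)*ζ)) volume 0 1 := by
        apply ContinuousOn.intervalIntegrable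
        have hmaps : Set.MapsTo (fun t : ℝ => (t:ℂ) * ζ) (Set.uIcc (0:ℝ) 1) uD := hmem
        have hc1 : ContinuousOn (fun t : ℝ => (t:ℂ) * ζ) (Set.uIcc (0:ℝ) 1) :=
          (Complex.continuous_ofReal.mul continuous_const).continuousOn
        exact (hcu.comp hc1 hmaps).add ((hc1.mul (hcu'.comp hc1 hmaps)))
      rw [intervalIntegral.integral_eq_sub_of_hasDerivAt hder hint]
      simp
    rw [hI] at key
    exact key.2

  · -- hF_meas
    filter_upwards [ball_mem_nhds ζ hεpos] with x hx
    apply ContinuousOn.aestronglyMeasurable _ measurableSet_uIoc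
    have hmaps : Set.MapsTo (fun t : ℝ => (t:ℂ) * x) (Set.uIoc (0:ℝ) 1) uD := by
      intro t ht
      rw [Set.uIoc_of_le (zero_le_one' ℝ)] at ht
      exact hKsub (htx_mem t ⟨le_of_lt ht.1, ht.2⟩ x hx)
    exact continuousOn_const.mul
      ((hcu.comp ((Complex.continuous_ofReal.mul continuous_const).continuousOn) hmaps))
  · -- hF_int
    apply ContinuousOn.intervalIntegrable
    have hmaps : Set.MapsTo (fun t : ℝ => (t:ℂ) * ζ) (Set.uIcc (0:ℝ) 1) uD := by
      intro t ht
      rw [Set.uIcc_of_le (zero_le_one' ℝ)] at ht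
      exact hKsub (htx_mem t ht ζ (mem_ball_self hεpos))
    exact continuousOn_const.mul
      ((hcu.comp ((Complex.continuous_ofReal.mul continuous_const).continuousOn) hmaps))
  · -- hF'_meas
    apply ContinuousOn.aestronglyMeasurable _ measurableSet_uIoc
    have hmaps : Set.MapsTo (fun t : ℝ => (t:ℂ) * ζ) (Set.uIoc (0:ℝ) 1) uD := by
      intro t ht
      rw [Set.uIoc_of_le (zero_le_one' ℝ)] at ht
      exact hKsub (htx_mem t ⟨le_of_lt ht.1, ht.2⟩ ζ (mem_ball_self hεpos))
    have hc1 : ContinuousOn (fun t : ℝ => (t:ℂ) * ζ) (Set.uIoc (0:ℝ) 1) :=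
      (Complex.continuous_ofReal.mul continuous_const).continuousOn
    exact (hcu.comp hc1 hmaps).add ((hc1.mul (hcu'.comp hc1 hmaps)))
  · -- h_bound
    apply Filter.Eventually.of_forall
    intro t ht x hx
    rw [Set.uIoc_of_le (zero_le_one' ℝ)] at ht
    have hmem := htx_mem t ⟨le_of_lt ht.1, ht.2⟩ x hx
    have h1 : ‖u ((t:ℂ)*x)‖ ≤ Cu := hCu _ hmem
    have h2 : ‖(t:ℂ) * x * deriv u ((t:ℂ)*x)‖ ≤ Cu' := by
      rw [norm_mul]
      have h3 : ‖deriv u ((t:ℂ)*x)‖ ≤ Cu' := hCu' _ hmem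
      have h4 : ‖(t:ℂ) * x‖ ≤ 1 := by
        rw [norm_mul, Complex.norm_real, Real.norm_eq_abs, abs_of_nonneg (le_of_lt ht.1)]
        have := hballr x hx
        nlinarith [ht.2, norm_nonneg x, le_of_lt ht.1]
      calc ‖(t:ℂ)*x‖ * ‖deriv u ((t:ℂ)*x)‖ ≤ 1 * Cu' := by
            exact mul_le_mul h4 h3 (norm_nonneg _) zero_le_one
        _ = Cu' := one_mul _
    calc ‖u ((t:ℂ)*x) + (t:ℂ)*x*deriv u ((t:ℂ)*x)‖
        ≤ ‖u ((t:ℂ)*x)‖ + ‖(t:ℂ)*x*deriv u ((t:ℂ)*x)‖ := norm_add_le _ _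
      _ ≤ Cu + Cu' := add_le_add h1 h2
  · -- bound_integrable
    exact intervalIntegrable_const
  · -- h_diff
    apply Filter.Eventually.of_forall
    intro t ht x hx
    rw [Set.uIoc_of_le (zero_le_one' ℝ)] at ht
    have hmem : (t:ℂ)*x ∈ uD := hKsub (htx_mem t ⟨le_of_lt ht.1, ht.2⟩ x hx)
    have hud : HasDerivAt u (deriv u ((t:ℂ)*x)) ((t:ℂ)*x) :=
      ((hu _ hmem).differentiableAt).hasDerivAt
    have hinner : HasDerivAt (fun y : ℂ => (t:ℂ)*y) (t:ℂ) x := by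
      simpa using (hasDerivAt_id x).const_mul (t:ℂ)
    have hcomp : HasDerivAt (fun y => u ((t:ℂ)*y)) (deriv u ((t:ℂ)*x) * (t:ℂ)) x :=
      hud.comp x hinner
    have hprod := (hasDerivAt_id' x).mul hcomp
    refine hprod.congr_deriv ?_
    ring

section structural

variable {φ g : ℂ → ℂ}

lemma CphiUg_hasDerivAt (hφ : AnalyticOnNhd ℂ φ uD) (hφm : Set.MapsTo φ uD uD)
    (hg : AnalyticOnNhd ℂ g uD) {f : ℂ → ℂ} (hf : AnalyticOnNhd ℂ f uD) {z : ℂ} (hz : z ∈ uD) :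
    HasDerivAt (CphiUg g φ f) (f (φ z) * deriv g (φ z) * deriv φ z) z := by
  have hu : AnalyticOnNhd ℂ (fun ζ => f ζ * deriv g ζ) uD := hf.mul hg.deriv
  have hP := hasDerivAt_primitive hu (hφm hz)
  have hφd : HasDerivAt φ (deriv φ z) z := ((hφ z hz).differentiableAt).hasDerivAt
  have h := HasDerivAt.comp z hP hφd
  have heq : CphiUg g φ f = (fun x : ℂ => ∫ t in (0:ℝ)..1,
      x * ((fun ζ => f ζ * deriv g ζ) ((t:ℂ) * x))) ∘ φ := rfl
  rw [heq]
  exact h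

lemma CphiUg_analytic (hφ : AnalyticOnNhd ℂ φ uD) (hφm : Set.MapsTo φ uD uD)
    (hg : AnalyticOnNhd ℂ g uD) {f : ℂ → ℂ} (hf : AnalyticOnNhd ℂ f uD) :
    AnalyticOnNhd ℂ (CphiUg g φ f) uD :=
  DifferentiableOn.analyticOnNhd
    (fun z hz => ((CphiUg_hasDerivAt hφ hφm hg hf hz).differentiableAt).differentiableWithinAt)
    uD_open

lemma CphiUg_deriv (hφ : AnalyticOnNhd ℂ φ uD) (hφm : Set.MapsTo φ uD uD)
    (hg : AnalyticOnNhd ℂ g uD) {f : ℂ → ℂ} (hf : AnalyticOnNhd ℂ f uD) {z : ℂ} (hz : z ∈ uD) :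
    deriv (CphiUg g φ f) z = f (φ z) * deriv g (φ z) * deriv φ z :=
  (CphiUg_hasDerivAt hφ hφm hg hf hz).deriv

lemma CphiUg_deriv2 (hφ : AnalyticOnNhd ℂ φ uD) (hφm : Set.MapsTo φ uD uD)
    (hg : AnalyticOnNhd ℂ g uD) {f : ℂ → ℂ} (hf : AnalyticOnNhd ℂ f uD) {z : ℂ} (hz : z ∈ uD) :
    deriv (deriv (CphiUg g φ f)) z =
      deriv f (φ z) * (deriv g (φ z) * (deriv φ z)^2)
      + f (φ z) * (deriv g (φ z) * deriv (deriv φ) z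
          + deriv (deriv g) (φ z) * (deriv φ z)^2) := by
  have hev : deriv (CphiUg g φ f) =ᶠ[nhds z]
      (fun w => f (φ w) * deriv g (φ w) * deriv φ w) := by
    filter_upwards [uD_open.mem_nhds hz] with w hw
    exact (CphiUg_hasDerivAt hφ hφm hg hf hw).deriv
  rw [hev.deriv_eq]
  have hφd : HasDerivAt φ (deriv φ z) z := ((hφ z hz).differentiableAt).hasDerivAt
  have hfd : HasDerivAt (fun w => f (φ w)) (deriv f (φ z) * deriv φ z) z :=
    HasDerivAt.comp z ((hf (φ z) (hφm hz)).differentiableAt).hasDerivAt hφd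
  have hgd : HasDerivAt (fun w => deriv g (φ w)) (deriv (deriv g) (φ z) * deriv φ z) z :=
    HasDerivAt.comp z ((hg.deriv (φ z) (hφm hz)).differentiableAt).hasDerivAt hφd
  have hφ'd : HasDerivAt (deriv φ) (deriv (deriv φ) z) z :=
    ((hφ.deriv z hz).differentiableAt).hasDerivAt
  refine (((hfd.mul hgd).mul hφ'd).deriv).trans ?_
  simp only [Pi.mul_apply]
  ring

end structural

section growth

/-- FTC along the radius. -/
lemma diff_eq_integral {h : ℂ → ℂ} (hh : AnalyticOnNhd ℂ h uD) {w : ℂ} (hw : w ∈ uD) :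
    h w - h 0 = ∫ t in (0:ℝ)..1, w * deriv h ((t:ℂ)*w) := by
  have hmem : ∀ t ∈ Set.uIcc (0:ℝ) 1, (t:ℂ)*w ∈ uD := by
    intro t ht
    rw [Set.uIcc_of_le (zero_le_one' ℝ)] at ht
    exact smul_mem_uD hw ht.1 ht.2
  have hder : ∀ t ∈ Set.uIcc (0:ℝ) 1,
      HasDerivAt (fun s : ℝ => h ((s:ℂ)*w)) (w * deriv h ((t:ℂ)*w)) t := by
    intro t ht
    have hm := hmem t ht
    have hhd : HasDerivAt h (deriv h ((t:ℂ)*w)) ((t:ℂ)*w) :=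
      ((hh _ hm).differentiableAt).hasDerivAt
    have hinner : HasDerivAt (fun y : ℂ => y * w) w ((t:ℂ)) := by
      simpa using (hasDerivAt_id ((t:ℂ))).mul_const w
    have hcomp : HasDerivAt (fun y : ℂ => h (y*w)) (deriv h ((t:ℂ)*w) * w) (t:ℂ) :=
      HasDerivAt.comp (t:ℂ) hhd hinner
    have h5 := hcomp.comp_ofReal
    convert h5 using 1
    ring
  have hint : IntervalIntegrable (fun t : ℝ => w * deriv h ((t:ℂ)*w)) volume 0 1 := by
    apply ContinuousOn.intervalIntegrable
    have hc1 : ContinuousOn (fun t : ℝ => (t:ℂ) * w) (Set.uIcc (0:ℝ) 1) :=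
      (Complex.continuous_ofReal.mul continuous_const).continuousOn
    exact continuousOn_const.mul ((hh.deriv.continuousOn).comp hc1 hmem)
  have := intervalIntegral.integral_eq_sub_of_hasDerivAt hder hint
  rw [this]
  norm_num

/-- log x ≤ 2 √x -/
lemma log_le_two_sqrt {x : ℝ} (hx : 0 < x) : Real.log x ≤ 2 * Real.sqrt x := by
  have h1 : Real.log x = 2 * Real.log (Real.sqrt x) := by
    rw [Real.log_sqrt (le_of_lt hx)]; ring
  have h2 : Real.log (Real.sqrt x) ≤ Real.sqrt x - 1 :=
    Real.log_le_sub_one_of_pos (Real.sqrt_pos.mpr hx)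
  nlinarith [Real.sqrt_nonneg x]

/-- `∫₀¹ r/(1-tr) dt = log (1/(1-r))` for `0 ≤ r < 1`. -/
lemma integral_aux1 {r : ℝ} (hr0 : 0 ≤ r) (hr1 : r < 1) :
    (∫ t in (0:ℝ)..1, r / (1 - t*r)) = Real.log (1/(1-r)) := by
  have hne : ∀ t ∈ Set.uIcc (0:ℝ) 1, 1 - t*r ≠ 0 := by
    intro t ht
    rw [Set.uIcc_of_le (zero_le_one' ℝ)] at ht
    nlinarith [ht.1, ht.2]
  have hder : ∀ t ∈ Set.uIcc (0:ℝ) 1,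
      HasDerivAt (fun t : ℝ => -Real.log (1 - t*r)) (r / (1 - t*r)) t := by
    intro t ht
    have hinner : HasDerivAt (fun t : ℝ => 1 - t*r) (-r) t := by
      simpa using HasDerivAt.const_sub 1 ((hasDerivAt_id t).mul_const r)
    have hlog := (Real.hasDerivAt_log (hne t ht)).comp t hinner
    have := hlog.neg
    refine this.congr_deriv ?_
    ring
  have hint : IntervalIntegrable (fun t : ℝ => r / (1 - t*r)) volume 0 1 := by
    apply ContinuousOn.intervalIntegrable
    exact continuousOn_const.div (continuousOn_const.sub (continuousOn_id.mul continuousOn_const)) hne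
  rw [intervalIntegral.integral_eq_sub_of_hasDerivAt hder hint]
  have h1 : (1:ℝ) - 1*r = 1 - r := by ring
  rw [h1]
  simp [Real.log_div, one_div, Real.log_inv]

/-- `∫₀¹ (1-tr)^{-1/2} dt ≤ 2` for `0 ≤ r < 1`. -/
lemma integral_aux2 {r : ℝ} (hr0 : 0 ≤ r) (hr1 : r < 1) :
    (∫ t in (0:ℝ)..1, 1 / Real.sqrt (1 - t*r)) ≤ 2 := by
  have hpos : ∀ t ∈ Set.uIcc (0:ℝ) 1, 0 < 1 - t*r := by
    intro t ht
    rw [Set.uIcc_of_le (zero_le_one' ℝ)] at ht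
    nlinarith [ht.1, ht.2]
  rcases eq_or_lt_of_le hr0 with h | hrpos
  · rw [← h]
    norm_num
  · have hder : ∀ t ∈ Set.uIcc (0:ℝ) 1,
        HasDerivAt (fun t : ℝ => -(2/r) * Real.sqrt (1 - t*r)) (1 / Real.sqrt (1 - t*r)) t := by
      intro t ht
      have hne := (hpos t ht).ne'
      have hinner : HasDerivAt (fun t : ℝ => 1 - t*r) (-r) t := by
        simpa using HasDerivAt.const_sub 1 ((hasDerivAt_id t).mul_const r)
      have hs := (Real.hasDerivAt_sqrt hne).comp t hinner
      have := hs.const_mul (-(2/r))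
      refine this.congr_deriv ?_
      have hrne : r ≠ 0 := hrpos.ne'
      have hsne : Real.sqrt (1 - t*r) ≠ 0 := Real.sqrt_ne_zero'.mpr (hpos t ht)
      field_simp
    have hint : IntervalIntegrable (fun t : ℝ => 1 / Real.sqrt (1 - t*r)) volume 0 1 := by
      apply ContinuousOn.intervalIntegrable
      apply continuousOn_const.div
      · exact (Real.continuous_sqrt.comp_continuousOn
          (continuousOn_const.sub (continuousOn_id.mul continuousOn_const)))
      · intro t ht
        exact Real.sqrt_ne_zero'.mpr (hpos t ht)
    rw [intervalIntegral.integral_eq_sub_of_hasDerivAt hder hint]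
    have h1 : (1:ℝ) - 1*r = 1 - r := by ring
    have h0 : (1:ℝ) - 0*r = 1 := by ring
    rw [h1, h0, Real.sqrt_one]
    have hsr : 1 - r ≤ Real.sqrt (1 - r) := by
      have h := Real.sqrt_le_sqrt (show (1-r)^2 ≤ 1-r by nlinarith)
      rwa [Real.sqrt_sq (by linarith : (0:ℝ) ≤ 1-r)] at h
    have h2 : 0 < 2/r := by positivity
    have : -(2/r) * Real.sqrt (1-r) - -(2/r) * 1 = (2/r) * (1 - Real.sqrt (1-r)) := by ring
    rw [this]
    calc (2/r) * (1 - Real.sqrt (1-r)) ≤ (2/r) * r := by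
          apply mul_le_mul_of_nonneg_left _ (le_of_lt h2)
          linarith
      _ = 2 := by field_simp

end growth

section estimates

lemma M_nonneg {f : ℂ → ℂ} {M : ℝ}
    (hM : ∀ z ∈ uD, (1 - ‖z‖^2) * ‖deriv (deriv f) z‖ ≤ M) : 0 ≤ M := by
  have h := hM 0 zero_uD
  simp only [norm_zero] at h
  nlinarith [norm_nonneg (deriv (deriv f) 0)]

lemma deriv_growth {f : ℂ → ℂ} (hf : AnalyticOnNhd ℂ f uD) {M : ℝ}
    (hM : ∀ z ∈ uD, (1 - ‖z‖^2) * ‖deriv (deriv f) z‖ ≤ M) {w : ℂ} (hw : w ∈ uD) :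
    ‖deriv f w‖ ≤ ‖deriv f 0‖ + M * Real.log (1/(1-‖w‖)) := by
  have hM0 : 0 ≤ M := M_nonneg hM
  have hr0 : 0 ≤ ‖w‖ := norm_nonneg w
  have hr1 : ‖w‖ < 1 := mem_uD.mp hw
  set r := ‖w‖ with hrdef
  have key : ‖deriv f w - deriv f 0‖ ≤ M * Real.log (1/(1-r)) := by
    rw [diff_eq_integral hf.deriv hw]
    have hb : ∀ t ∈ Set.Ioc (0:ℝ) 1,
        ‖w * deriv (deriv f) ((t:ℂ)*w)‖ ≤ M * (r/(1-t*r)) := by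
      intro t ht
      have hm : (t:ℂ)*w ∈ uD := smul_mem_uD hw (le_of_lt ht.1) ht.2
      have hnorm : ‖(t:ℂ)*w‖ = t*r := by
        rw [norm_mul, Complex.norm_real, Real.norm_eq_abs, abs_of_nonneg (le_of_lt ht.1)]
      have hpos1 : 0 < 1 - t*r := one_sub_mul_pos (le_of_lt ht.1) ht.2 hr0 hr1
      have htr0 : 0 ≤ t*r := mul_nonneg (le_of_lt ht.1) hr0
      have hpos2 : 0 < 1 - (t*r)^2 := by nlinarith
      have hMz := hM _ hm
      rw [hnorm] at hMz
      have hN : ‖deriv (deriv f) ((t:ℂ)*w)‖ ≤ M / (1 - (t*r)^2) := by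
        rw [le_div_iff₀ hpos2]
        calc ‖deriv (deriv f) ((t:ℂ)*w)‖ * (1 - (t*r)^2)
            = (1 - (t*r)^2) * ‖deriv (deriv f) ((t:ℂ)*w)‖ := by ring
          _ ≤ M := hMz
      calc ‖w * deriv (deriv f) ((t:ℂ)*w)‖ = r * ‖deriv (deriv f) ((t:ℂ)*w)‖ := by
            rw [norm_mul]
        _ ≤ r * (M / (1 - (t*r)^2)) := mul_le_mul_of_nonneg_left hN hr0
        _ ≤ r * (M / (1 - t*r)) := by
            apply mul_le_mul_of_nonneg_left _ hr0
            apply div_le_div_of_nonneg_left hM0 hpos1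
            nlinarith
        _ = M * (r/(1-t*r)) := by ring
    have hint : IntervalIntegrable (fun t : ℝ => M * (r/(1-t*r))) volume 0 1 := by
      apply ContinuousOn.intervalIntegrable
      apply continuousOn_const.mul
      apply continuousOn_const.div
        (continuousOn_const.sub (continuousOn_id.mul continuousOn_const))
      intro t ht
      rw [Set.uIcc_of_le (zero_le_one' ℝ)] at ht
      exact (one_sub_mul_pos ht.1 ht.2 hr0 hr1).ne'
    calc ‖∫ t in (0:ℝ)..1, w * deriv (deriv f) ((t:ℂ)*w)‖
        ≤ ∫ t in (0:ℝ)..1, M * (r/(1-t*r)) := by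
          apply my_norm_integral_le hb hint
          intro t ht
          have := one_sub_mul_pos ht.1 ht.2 hr0 hr1
          positivity
      _ = M * ∫ t in (0:ℝ)..1, r/(1-t*r) := by
          rw [intervalIntegral.integral_const_mul]
      _ = M * Real.log (1/(1-r)) := by
          rw [show (∫ t in (0:ℝ)..1, r/(1-t*r)) = ∫ t in (0:ℝ)..1, r/(1-t*r) from rfl,
            integral_aux1 hr0 hr1]
  have htri : ‖deriv f w‖ ≤ ‖deriv f 0‖ + ‖deriv f w - deriv f 0‖ := by
    have := norm_add_le (deriv f w - deriv f 0) (deriv f 0)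
    simpa [sub_add_cancel, add_comm] using this
  linarith

lemma one_div_le_two_div {r : ℝ} (hr0 : 0 ≤ r) (hr1 : r < 1) :
    1/(1-r) ≤ 2/(1-r^2) := by
  rw [div_le_div_iff₀ (by linarith) (by nlinarith)]
  nlinarith

lemma deriv_growth' {f : ℂ → ℂ} (hf : AnalyticOnNhd ℂ f uD) {M : ℝ}
    (hM : ∀ z ∈ uD, (1 - ‖z‖^2) * ‖deriv (deriv f) z‖ ≤ M) {w : ℂ} (hw : w ∈ uD) :
    ‖deriv f w‖ ≤ ‖deriv f 0‖ + M * Real.log (2/(1-‖w‖^2)) := by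
  have hM0 : 0 ≤ M := M_nonneg hM
  have hr0 : 0 ≤ ‖w‖ := norm_nonneg w
  have hr1 : ‖w‖ < 1 := mem_uD.mp hw
  have h1 := deriv_growth hf hM hw
  have h2 : Real.log (1/(1-‖w‖)) ≤ Real.log (2/(1-‖w‖^2)) := by
    have hp : (0:ℝ) < 1 - ‖w‖ := by linarith
    apply Real.log_le_log (by positivity)
    exact one_div_le_two_div hr0 hr1
  nlinarith

lemma value_growth {f : ℂ → ℂ} (hf : AnalyticOnNhd ℂ f uD) {M : ℝ}
    (hM : ∀ z ∈ uD, (1 - ‖z‖^2) * ‖deriv (deriv f) z‖ ≤ M) {w : ℂ} (hw : w ∈ uD) :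
    ‖f w‖ ≤ ‖f 0‖ + ‖deriv f 0‖ + 4*M := by
  have hM0 : 0 ≤ M := M_nonneg hM
  have hr0 : 0 ≤ ‖w‖ := norm_nonneg w
  have hr1 : ‖w‖ < 1 := mem_uD.mp hw
  set r := ‖w‖ with hrdef
  have hposIcc : ∀ t ∈ Set.uIcc (0:ℝ) 1, 0 < 1 - t*r := by
    intro t ht
    rw [Set.uIcc_of_le (zero_le_one' ℝ)] at ht
    nlinarith [ht.1, ht.2]
  have key : ‖f w - f 0‖ ≤ ‖deriv f 0‖ + 4*M := by
    rw [diff_eq_integral hf hw]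
    have hb : ∀ t ∈ Set.Ioc (0:ℝ) 1,
        ‖w * deriv f ((t:ℂ)*w)‖ ≤ ‖deriv f 0‖ + 2*M * (1/Real.sqrt (1-t*r)) := by
      intro t ht
      have hm : (t:ℂ)*w ∈ uD := smul_mem_uD hw (le_of_lt ht.1) ht.2
      have hnorm : ‖(t:ℂ)*w‖ = t*r := by
        rw [norm_mul, Complex.norm_real, Real.norm_eq_abs, abs_of_nonneg (le_of_lt ht.1)]
      have hpos1 : 0 < 1 - t*r := one_sub_mul_pos (le_of_lt ht.1) ht.2 hr0 hr1
      have h1 := deriv_growth hf hM hm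
      rw [hnorm] at h1
      have h2 : Real.log (1/(1-t*r)) ≤ 2 * (1/Real.sqrt (1-t*r)) := by
        calc Real.log (1/(1-t*r)) ≤ 2 * Real.sqrt (1/(1-t*r)) :=
              log_le_two_sqrt (by positivity)
          _ = 2 * (1/Real.sqrt (1-t*r)) := by
              rw [one_div, Real.sqrt_inv, one_div]
      calc ‖w * deriv f ((t:ℂ)*w)‖ = r * ‖deriv f ((t:ℂ)*w)‖ := by rw [norm_mul]
        _ ≤ 1 * ‖deriv f ((t:ℂ)*w)‖ :=
            mul_le_mul_of_nonneg_right (le_of_lt hr1) (norm_nonneg _)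
        _ = ‖deriv f ((t:ℂ)*w)‖ := one_mul _
        _ ≤ ‖deriv f 0‖ + M * Real.log (1/(1-t*r)) := h1
        _ ≤ ‖deriv f 0‖ + M * (2 * (1/Real.sqrt (1-t*r))) := by
            have := mul_le_mul_of_nonneg_left h2 hM0
            linarith
        _ = ‖deriv f 0‖ + 2*M * (1/Real.sqrt (1-t*r)) := by ring
    have hint2 : IntervalIntegrable (fun t : ℝ => 1/Real.sqrt (1-t*r)) volume 0 1 := by
      apply ContinuousOn.intervalIntegrable
      apply continuousOn_const.div
      · exact Real.continuous_sqrt.comp_continuousOn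
          (continuousOn_const.sub (continuousOn_id.mul continuousOn_const))
      · intro t ht
        exact Real.sqrt_ne_zero'.mpr (hposIcc t ht)
    have hint : IntervalIntegrable
        (fun t : ℝ => ‖deriv f 0‖ + 2*M * (1/Real.sqrt (1-t*r))) volume 0 1 :=
      intervalIntegrable_const.add (hint2.const_mul (2*M))
    calc ‖∫ t in (0:ℝ)..1, w * deriv f ((t:ℂ)*w)‖
        ≤ ∫ t in (0:ℝ)..1, (‖deriv f 0‖ + 2*M * (1/Real.sqrt (1-t*r))) := by
          apply my_norm_integral_le hb hint
          intro t ht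
          have := one_sub_mul_pos ht.1 ht.2 hr0 hr1
          positivity
      _ = ‖deriv f 0‖ + 2*M * ∫ t in (0:ℝ)..1, 1/Real.sqrt (1-t*r) := by
          rw [intervalIntegral.integral_add intervalIntegrable_const
            (hint2.const_mul (2*M)), intervalIntegral.integral_const_mul,
            intervalIntegral.integral_const]
          simp
      _ ≤ ‖deriv f 0‖ + 2*M * 2 := by
          have hJ := integral_aux2 hr0 hr1
          have := mul_le_mul_of_nonneg_left hJ (by linarith : (0:ℝ) ≤ 2*M)
          linarith
      _ = ‖deriv f 0‖ + 4*M := by ring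
  have htri : ‖f w‖ ≤ ‖f 0‖ + ‖f w - f 0‖ := by
    have := norm_add_le (f w - f 0) (f 0)
    simpa [sub_add_cancel, add_comm] using this
  linarith

end estimates

section testfn

open Complex

lemma test_fn (w : ℂ) (hw : w ∈ uD) (hw2 : 1/2 < ‖w‖^2) :
    ∃ fw : ℂ → ℂ, AnalyticOnNhd ℂ fw uD ∧
      (∀ z ∈ uD, (1 - ‖z‖^2) * ‖deriv (deriv fw) z‖ ≤ 2) ∧
      fw 0 = 0 ∧ ‖deriv fw 0‖ ≤ 1 ∧
      ‖deriv fw w‖ = Real.log (2/(1-‖w‖^2)) ∧ ‖fw w‖ ≤ 7 := by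
  set cw : ℂ := (starRingEnd ℂ) w with hcw_def
  have hcw_norm : ‖cw‖ = ‖w‖ := by simp [hcw_def]
  have hw1 : ‖w‖ < 1 := mem_uD.mp hw
  have hwpos : (0:ℝ) < ‖w‖ := by nlinarith [norm_nonneg w]
  have hcw0 : cw ≠ 0 := by
    intro h
    rw [h, norm_zero] at hcw_norm
    exact hwpos.ne (hcw_norm)
  -- basic facts about 1 - cw z
  have hkey : ∀ z ∈ uD, (1 - ‖z‖ ≤ ‖1 - cw*z‖ ∧ (1 - cw*z) ∈ Complex.slitPlane) := by
    intro z hz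
    have hz1 : ‖z‖ < 1 := mem_uD.mp hz
    have hn : ‖cw*z‖ < 1 := by
      rw [norm_mul, hcw_norm]
      nlinarith [norm_nonneg z, norm_nonneg w]
    constructor
    · have := norm_sub_norm_le (1:ℂ) (cw*z)
      have h1 : ‖(1:ℂ)‖ = 1 := norm_one
      have hle : ‖cw*z‖ ≤ ‖z‖ := by
        rw [norm_mul, hcw_norm]
        nlinarith [norm_nonneg z, norm_nonneg w]
      linarith
    · rw [Complex.mem_slitPlane_iff]
      left
      have hre : (cw*z).re ≤ ‖cw*z‖ := by
        exact Complex.re_le_norm _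
      simp only [Complex.sub_re, Complex.one_re]
      linarith
  have hne : ∀ z ∈ uD, (1 - cw*z) ≠ 0 := by
    intro z hz
    have := (hkey z hz).1
    have hz1 : ‖z‖ < 1 := mem_uD.mp hz
    intro h
    rw [h, norm_zero] at this
    linarith
  -- the test function
  set fw : ℂ → ℂ := fun z => ((Real.log 2 : ℝ) : ℂ) * z
      + ((1 - cw*z) * (Complex.log (1-cw*z) - 1) + 1) / cw with hfw_def
  set L : ℂ → ℂ := fun z => ((Real.log 2 : ℝ) : ℂ) - Complex.log (1-cw*z) with hL_def
  have hlin : ∀ z : ℂ, HasDerivAt (fun z : ℂ => 1 - cw*z) (-cw) z := by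
    intro z
    simpa using HasDerivAt.const_sub 1 ((hasDerivAt_id z).const_mul cw)
  have hD1 : ∀ z ∈ uD, HasDerivAt fw (L z) z := by
    intro z hz
    have hlogc : HasDerivAt (fun z : ℂ => Complex.log (1-cw*z)) ((1-cw*z)⁻¹ * (-cw)) z := by
      have := (Complex.hasDerivAt_log (hkey z hz).2).comp z (hlin z); exact this
    have hsub := hlogc.sub_const 1
    have hprod := (hlin z).mul hsub
    have hq := (hprod.add_const 1).div_const cw
    have hlead : HasDerivAt (fun z : ℂ => ((Real.log 2 : ℝ) : ℂ) * z)
        ((Real.log 2 : ℝ) : ℂ) z := by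
      simpa using (hasDerivAt_id z).const_mul ((Real.log 2 : ℝ) : ℂ)
    have htot := hlead.add hq
    refine htot.congr_deriv ?_
    have h1 := hne z hz
    rw [hL_def]
    field_simp
    ring
  have hD2 : ∀ z ∈ uD, HasDerivAt L (cw/(1-cw*z)) z := by
    intro z hz
    have hlogc : HasDerivAt (fun z : ℂ => Complex.log (1-cw*z)) ((1-cw*z)⁻¹ * (-cw)) z := by
      have := (Complex.hasDerivAt_log (hkey z hz).2).comp z (hlin z); exact this
    have := HasDerivAt.const_sub ((Real.log 2 : ℝ) : ℂ) hlogc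
    refine this.congr_deriv ?_
    have h1 := hne z hz
    ring
  have hanal : AnalyticOnNhd ℂ fw uD :=
    DifferentiableOn.analyticOnNhd
      (fun z hz => ((hD1 z hz).differentiableAt).differentiableWithinAt) uD_open
  have hderiv_fw : ∀ z ∈ uD, deriv fw z = L z := fun z hz => (hD1 z hz).deriv
  have hderiv2 : ∀ z ∈ uD, deriv (deriv fw) z = cw/(1-cw*z) := by
    intro z hz
    have hev : deriv fw =ᶠ[nhds z] L := by
      filter_upwards [uD_open.mem_nhds hz] with x hx
      exact hderiv_fw x hx
    rw [hev.deriv_eq]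
    exact (hD2 z hz).deriv
  refine ⟨fw, hanal, ?_, ?_, ?_, ?_, ?_⟩
  · -- zygmund bound
    intro z hz
    rw [hderiv2 z hz]
    have hz1 : ‖z‖ < 1 := mem_uD.mp hz
    have hd := (hkey z hz).1
    have hd0 : (0:ℝ) < ‖1 - cw*z‖ := by linarith
    rw [norm_div, hcw_norm, ← mul_div_assoc, div_le_iff₀ hd0]
    have e1 : (1-‖z‖^2) * ‖w‖ ≤ 1-‖z‖^2 := by
      nlinarith [mul_nonneg (by nlinarith [norm_nonneg z] : (0:ℝ) ≤ 1-‖z‖^2) (by linarith : (0:ℝ) ≤ 1-‖w‖)]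
    have e2 : 1-‖z‖^2 ≤ 2*(1-‖z‖) := by nlinarith [sq_nonneg (1-‖z‖)]
    linarith
  · -- fw 0 = 0
    rw [hfw_def]
    simp [Complex.log_one]
  · -- ‖deriv fw 0‖ ≤ 1
    rw [hderiv_fw 0 zero_uD, hL_def]
    simp only [mul_zero, sub_zero, Complex.log_one]
    rw [Complex.norm_real, Real.norm_eq_abs, _root_.abs_of_nonneg (Real.log_nonneg one_le_two)]
    linarith [Real.log_le_sub_one_of_pos (show (0:ℝ) < 2 by norm_num)]
  · -- value of deriv at w
    rw [hderiv_fw w hw]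
    simp only [hL_def]
    have hmc : cw * w = ((‖w‖^2 : ℝ) : ℂ) := by
      rw [hcw_def, mul_comm, Complex.mul_conj, Complex.normSq_eq_norm_sq]
      try norm_cast
    have hcast : (1 : ℂ) - cw*w = (((1 - ‖w‖^2 : ℝ)) : ℂ) := by
      rw [hmc]; push_cast; try ring
    have hpos : (0:ℝ) < 1 - ‖w‖^2 := by nlinarith
    rw [hcast, ← Complex.ofReal_log (le_of_lt hpos)]
    rw [← Complex.ofReal_sub, Complex.norm_real, Real.norm_eq_abs]
    rw [← Real.log_div (by norm_num) hpos.ne']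
    exact _root_.abs_of_nonneg (Real.log_nonneg (by rw [le_div_iff₀ hpos]; nlinarith))
  · -- ‖fw w‖ ≤ 7
    have hmc : cw * w = ((‖w‖^2 : ℝ) : ℂ) := by
      rw [hcw_def, mul_comm, Complex.mul_conj, Complex.normSq_eq_norm_sq]
      try norm_cast
    have hcast : (1 : ℂ) - cw*w = (((1 - ‖w‖^2 : ℝ)) : ℂ) := by
      rw [hmc]; push_cast; try ring
    have hpos : (0:ℝ) < 1 - ‖w‖^2 := by nlinarith
    set s : ℝ := 1 - ‖w‖^2 with hs_def
    have hs12 : s < 1/2 := by rw [hs_def]; linarith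
    have hlog_s : Complex.log ((s:ℝ) : ℂ) = ((Real.log s : ℝ) : ℂ) :=
      (Complex.ofReal_log (le_of_lt hpos)).symm
    have hterm1 : ‖((Real.log 2 : ℝ) : ℂ) * w‖ ≤ 1 := by
      rw [norm_mul, Complex.norm_real, Real.norm_eq_abs,
        _root_.abs_of_nonneg (Real.log_nonneg (by norm_num))]
      have hl2 : Real.log 2 ≤ 1 := by
        calc Real.log 2 ≤ 2 - 1 := Real.log_le_sub_one_of_pos (by norm_num)
          _ = 1 := by norm_num
      nlinarith [norm_nonneg w, hw1, Real.log_nonneg (show (1:ℝ) ≤ 2 by norm_num)]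
    have hwhalf : (1:ℝ)/2 < ‖w‖ := by nlinarith [norm_nonneg w, hw1]
    have hs1 : s < 1 := by linarith
    have hlogneg : Real.log s < 0 := Real.log_neg hpos hs1
    have hslog : s * |Real.log s| ≤ 1 := by
      rw [_root_.abs_of_neg hlogneg]
      have hinv : Real.log (1/s) ≤ 1/s - 1 := Real.log_le_sub_one_of_pos (by positivity)
      rw [one_div, Real.log_inv] at hinv
      have h5 : -Real.log s ≤ 1/s := by
        rw [one_div] at *
        linarith
      calc s * -Real.log s ≤ s * (1/s) := by
            apply mul_le_mul_of_nonneg_left _ (le_of_lt hpos)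
            rw [one_div]; linarith [h5]
        _ = 1 := by field_simp
    have hterm2 : ‖((1 - cw*w) * (Complex.log (1-cw*w) - 1) + 1) / cw‖ ≤ 6 := by
      rw [norm_div, hcw_norm]
      have hnum : ‖(1 - cw*w) * (Complex.log (1-cw*w) - 1) + 1‖ ≤ 5/2 := by
        rw [hcast, hlog_s]
        have h2 : ‖(((Real.log s : ℝ) : ℂ) - 1)‖ ≤ |Real.log s| + 1 := by
          calc ‖(((Real.log s : ℝ) : ℂ) - 1)‖ ≤ ‖((Real.log s:ℝ):ℂ)‖ + ‖(1:ℂ)‖ :=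
                norm_sub_le _ _
            _ = |Real.log s| + 1 := by rw [Complex.norm_real, Real.norm_eq_abs, norm_one]
        have h1 : ‖((s:ℝ):ℂ) * (((Real.log s : ℝ) : ℂ) - 1)‖ ≤ 3/2 := by
          rw [norm_mul, Complex.norm_real, Real.norm_eq_abs, _root_.abs_of_nonneg (le_of_lt hpos)]
          calc s * ‖(((Real.log s : ℝ) : ℂ) - 1)‖ ≤ s * (|Real.log s| + 1) := by
                apply mul_le_mul_of_nonneg_left h2 (le_of_lt hpos)
            _ = s * |Real.log s| + s := by ring
            _ ≤ 1 + 1/2 := add_le_add hslog (le_of_lt hs12)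
            _ = 3/2 := by norm_num
        calc ‖((s:ℝ):ℂ) * (((Real.log s : ℝ) : ℂ) - 1) + 1‖
            ≤ ‖((s:ℝ):ℂ) * (((Real.log s : ℝ) : ℂ) - 1)‖ + ‖(1:ℂ)‖ := norm_add_le _ _
          _ ≤ 3/2 + 1 := by rw [norm_one]; linarith
          _ = 5/2 := by norm_num
      rw [div_le_iff₀ hwpos]
      linarith
    calc ‖fw w‖ ≤ ‖((Real.log 2 : ℝ) : ℂ) * w‖
          + ‖((1 - cw*w) * (Complex.log (1-cw*w) - 1) + 1) / cw‖ := norm_add_le _ _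
      _ ≤ 1 + 6 := add_le_add hterm1 hterm2
      _ = 7 := by norm_num

end testfn

section norms

lemma zygS_zero_nonneg (a : ℝ) (f : ℂ → ℂ) : 0 ≤ zygS a f 0 := by
  have h : zygS a f 0 = ‖deriv (deriv f) 0‖ := by
    unfold zygS
    simp [Real.one_rpow]
  rw [h]
  exact norm_nonneg _

lemma bddAbove_zygS {a : ℝ} {f : ℂ → ℂ} {M : ℝ} (h : ∀ z ∈ uD, zygS a f z ≤ M) :
    BddAbove (zygS a f '' uD) := by
  refine ⟨M, ?_⟩
  rintro x ⟨z, hz, rfl⟩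
  exact h z hz

lemma sSup_zygS_nonneg {a : ℝ} {f : ℂ → ℂ} {M : ℝ} (h : ∀ z ∈ uD, zygS a f z ≤ M) :
    0 ≤ sSup (zygS a f '' uD) :=
  le_trans (zygS_zero_nonneg a f)
    (le_csSup (bddAbove_zygS h) (Set.mem_image_of_mem _ zero_uD))

lemma zNorm_nonneg {a : ℝ} {f : ℂ → ℂ} (h : ∃ M : ℝ, ∀ z ∈ uD, zygS a f z ≤ M) :
    0 ≤ zNorm a f := by
  obtain ⟨M, h⟩ := h
  unfold zNorm
  have := sSup_zygS_nonneg h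
  have h1 := norm_nonneg (f 0)
  have h2 := norm_nonneg (deriv f 0)
  linarith

lemma zygS_le_zNorm {a : ℝ} {f : ℂ → ℂ} {M : ℝ} (h : ∀ z ∈ uD, zygS a f z ≤ M)
    {z : ℂ} (hz : z ∈ uD) : zygS a f z ≤ zNorm a f := by
  unfold zNorm
  have h1 : zygS a f z ≤ sSup (zygS a f '' uD) :=
    le_csSup (bddAbove_zygS h) (Set.mem_image_of_mem _ hz)
  have h2 := norm_nonneg (f 0)
  have h3 := norm_nonneg (deriv f 0)
  linarith

lemma norm_f0_le_zNorm {a : ℝ} {f : ℂ → ℂ} {M : ℝ} (h : ∀ z ∈ uD, zygS a f z ≤ M) :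
    ‖f 0‖ ≤ zNorm a f := by
  unfold zNorm
  have h1 := sSup_zygS_nonneg h
  have h2 := norm_nonneg (deriv f 0)
  linarith

lemma norm_df0_le_zNorm {a : ℝ} {f : ℂ → ℂ} {M : ℝ} (h : ∀ z ∈ uD, zygS a f z ≤ M) :
    ‖deriv f 0‖ ≤ zNorm a f := by
  unfold zNorm
  have h1 := sSup_zygS_nonneg h
  have h2 := norm_nonneg (f 0)
  linarith

lemma zNorm_le {a : ℝ} {f : ℂ → ℂ} {m : ℝ} (h : ∀ z ∈ uD, zygS a f z ≤ m) :
    zNorm a f ≤ ‖f 0‖ + ‖deriv f 0‖ + m := by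
  unfold zNorm
  have h0 : 0 ≤ m := le_trans (zygS_zero_nonneg a f) (h 0 zero_uD)
  have h1 : sSup (zygS a f '' uD) ≤ m := by
    apply Real.sSup_le _ h0
    rintro x ⟨z, hz, rfl⟩
    exact h z hz
  linarith

lemma zygS_one_eq (f : ℂ → ℂ) (z : ℂ) :
    zygS 1 f z = (1 - ‖z‖^2) * ‖deriv (deriv f) z‖ := by
  unfold zygS
  rw [Real.rpow_one]

lemma weight_nonneg (β : ℝ) {z : ℂ} (hz : z ∈ uD) : 0 ≤ (1 - ‖z‖^2) ^ β :=
  Real.rpow_nonneg (le_of_lt (one_sub_sq_pos hz)) β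

lemma memZ_analyticOnNhd {a : ℝ} {f : ℂ → ℂ} (h : memZ a f) : AnalyticOnNhd ℂ f uD :=
  (uD_open.analyticOn_iff_analyticOnNhd).mp h.1

lemma memZ_one_bound {f : ℂ → ℂ} (h : memZ 1 f) :
    ∀ z ∈ uD, (1 - ‖z‖^2) * ‖deriv (deriv f) z‖ ≤ zNorm 1 f := by
  intro z hz
  obtain ⟨M, hM⟩ := h.2
  rw [← zygS_one_eq]
  exact zygS_le_zNorm hM hz

end norms

section main

variable {φ g : ℂ → ℂ}

lemma sufficiency {β : ℝ} (hβ : 0 < β)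
    (hφ' : AnalyticOnNhd ℂ φ uD) (hφm : Set.MapsTo φ uD uD)
    (hg' : AnalyticOnNhd ℂ g uD) {M₁ M₂ : ℝ}
    (hM₁ : ∀ z ∈ uD, (1 - ‖z‖ ^ 2) ^ β *
      ‖deriv g (φ z) * deriv (deriv φ) z + deriv (deriv g) (φ z) * (deriv φ z) ^ 2‖ ≤ M₁)
    (hM₂ : ∀ z ∈ uD, (1 - ‖z‖ ^ 2) ^ β * Real.log (2 / (1 - ‖φ z‖ ^ 2)) *
      ‖deriv g (φ z) * (deriv φ z) ^ 2‖ ≤ M₂) :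
    boundedOp 1 β (CphiUg g φ) := by
  have hlog2 : (0:ℝ) < Real.log 2 := Real.log_pos one_lt_two
  have hM₁0 : 0 ≤ M₁ :=
    le_trans (mul_nonneg (weight_nonneg β zero_uD) (norm_nonneg _)) (hM₁ 0 zero_uD)
  have hM₂0 : 0 ≤ M₂ := by
    refine le_trans ?_ (hM₂ 0 zero_uD)
    have hpos := one_sub_sq_pos (zero_uD)
    have hlognn : 0 ≤ Real.log (2 / (1 - ‖φ 0‖ ^ 2)) := by
      apply Real.log_nonneg
      rw [le_div_iff₀ (one_sub_sq_pos (hφm zero_uD))]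
      nlinarith [norm_nonneg (φ 0), one_sub_sq_pos (hφm zero_uD)]
    exact mul_nonneg (mul_nonneg (weight_nonneg β zero_uD) hlognn) (norm_nonneg _)
  set K : ℝ := M₂ / Real.log 2 + M₂ + 6 * M₁ with hK_def
  have hK0 : 0 ≤ K := by
    have : 0 ≤ M₂ / Real.log 2 := by positivity
    rw [hK_def]; linarith
  -- the pointwise estimate
  have main : ∀ f, memZ 1 f → ∀ z ∈ uD, zygS β (CphiUg g φ f) z ≤ zNorm 1 f * K := by
    intro f hf z hz
    have hfA : AnalyticOnNhd ℂ f uD := memZ_analyticOnNhd hf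
    have hMf : ∀ z' ∈ uD, (1 - ‖z'‖^2) * ‖deriv (deriv f) z'‖ ≤ zNorm 1 f :=
      memZ_one_bound hf
    obtain ⟨Mb, hMb⟩ := hf.2
    have hMf0 : 0 ≤ zNorm 1 f := zNorm_nonneg hf.2
    have hw : φ z ∈ uD := hφm hz
    have hF2 := CphiUg_deriv2 hφ' hφm hg' hfA hz
    have hW0 : 0 ≤ (1 - ‖z‖ ^ 2) ^ β := weight_nonneg β hz
    have hLnn : 0 ≤ Real.log (2 / (1 - ‖φ z‖ ^ 2)) := by
      apply Real.log_nonneg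
      rw [le_div_iff₀ (one_sub_sq_pos hw)]
      nlinarith [norm_nonneg (φ z), one_sub_sq_pos hw]
    have hL2 : Real.log 2 ≤ Real.log (2 / (1 - ‖φ z‖ ^ 2)) := by
      apply Real.log_le_log (by norm_num)
      rw [le_div_iff₀ (one_sub_sq_pos hw)]
      nlinarith [norm_nonneg (φ z), one_sub_sq_pos hw]
    -- bound on the g-φ product term
    have hWG0 : 0 ≤ (1 - ‖z‖ ^ 2) ^ β * ‖deriv g (φ z) * (deriv φ z) ^ 2‖ :=
      mul_nonneg hW0 (norm_nonneg _)
    have hG1 : (1 - ‖z‖ ^ 2) ^ β * ‖deriv g (φ z) * (deriv φ z) ^ 2‖ ≤ M₂ / Real.log 2 := by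
      rw [le_div_iff₀ hlog2]
      calc (1 - ‖z‖ ^ 2) ^ β * ‖deriv g (φ z) * (deriv φ z) ^ 2‖ * Real.log 2
          ≤ (1 - ‖z‖ ^ 2) ^ β * ‖deriv g (φ z) * (deriv φ z) ^ 2‖
            * Real.log (2 / (1 - ‖φ z‖ ^ 2)) := by
            exact mul_le_mul_of_nonneg_left hL2 hWG0
        _ = (1 - ‖z‖ ^ 2) ^ β * Real.log (2 / (1 - ‖φ z‖ ^ 2))
            * ‖deriv g (φ z) * (deriv φ z) ^ 2‖ := by ring
        _ ≤ M₂ := hM₂ z hz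
    have hA : (1 - ‖z‖ ^ 2) ^ β *
        ‖deriv g (φ z) * deriv (deriv φ) z + deriv (deriv g) (φ z) * (deriv φ z) ^ 2‖ ≤ M₁ :=
      hM₁ z hz
    -- growth of f
    have hfv : ‖f (φ z)‖ ≤ 6 * zNorm 1 f := by
      have h1 := value_growth hfA hMf hw
      have h2 := norm_f0_le_zNorm hMb
      have h3 := norm_df0_le_zNorm hMb
      linarith
    have hfd : ‖deriv f (φ z)‖ ≤ zNorm 1 f
        + zNorm 1 f * Real.log (2 / (1 - ‖φ z‖ ^ 2)) := by
      have h1 := deriv_growth' hfA hMf hw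
      have h3 := norm_df0_le_zNorm hMb
      linarith
    -- assemble
    unfold zygS
    rw [hF2]
    calc (1 - ‖z‖ ^ 2) ^ β * ‖deriv f (φ z) * (deriv g (φ z) * (deriv φ z) ^ 2)
          + f (φ z) * (deriv g (φ z) * deriv (deriv φ) z
            + deriv (deriv g) (φ z) * (deriv φ z) ^ 2)‖
        ≤ (1 - ‖z‖ ^ 2) ^ β * (‖deriv f (φ z)‖ * ‖deriv g (φ z) * (deriv φ z) ^ 2‖
          + ‖f (φ z)‖ * ‖deriv g (φ z) * deriv (deriv φ) z
            + deriv (deriv g) (φ z) * (deriv φ z) ^ 2‖) := by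
          apply mul_le_mul_of_nonneg_left _ hW0
          calc ‖deriv f (φ z) * (deriv g (φ z) * (deriv φ z) ^ 2)
              + f (φ z) * (deriv g (φ z) * deriv (deriv φ) z
                + deriv (deriv g) (φ z) * (deriv φ z) ^ 2)‖
              ≤ ‖deriv f (φ z) * (deriv g (φ z) * (deriv φ z) ^ 2)‖
              + ‖f (φ z) * (deriv g (φ z) * deriv (deriv φ) z
                + deriv (deriv g) (φ z) * (deriv φ z) ^ 2)‖ := norm_add_le _ _
            _ = ‖deriv f (φ z)‖ * ‖deriv g (φ z) * (deriv φ z) ^ 2‖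
              + ‖f (φ z)‖ * ‖deriv g (φ z) * deriv (deriv φ) z
                + deriv (deriv g) (φ z) * (deriv φ z) ^ 2‖ := by
                rw [norm_mul (deriv f (φ z)) _, norm_mul (f (φ z)) _]
      _ = ‖deriv f (φ z)‖ * ((1 - ‖z‖ ^ 2) ^ β * ‖deriv g (φ z) * (deriv φ z) ^ 2‖)
          + ‖f (φ z)‖ * ((1 - ‖z‖ ^ 2) ^ β * ‖deriv g (φ z) * deriv (deriv φ) z
            + deriv (deriv g) (φ z) * (deriv φ z) ^ 2‖) := by ring
      _ ≤ (zNorm 1 f + zNorm 1 f * Real.log (2 / (1 - ‖φ z‖ ^ 2)))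
            * ((1 - ‖z‖ ^ 2) ^ β * ‖deriv g (φ z) * (deriv φ z) ^ 2‖)
          + (6 * zNorm 1 f) * M₁ := by
          apply add_le_add
          · exact mul_le_mul_of_nonneg_right hfd hWG0
          · exact mul_le_mul hfv hA (mul_nonneg hW0 (norm_nonneg _)) (by linarith)
      _ = zNorm 1 f * ((1 - ‖z‖ ^ 2) ^ β * ‖deriv g (φ z) * (deriv φ z) ^ 2‖)
          + zNorm 1 f * ((1 - ‖z‖ ^ 2) ^ β * ‖deriv g (φ z) * (deriv φ z) ^ 2‖
            * Real.log (2 / (1 - ‖φ z‖ ^ 2)))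
          + 6 * zNorm 1 f * M₁ := by ring
      _ ≤ zNorm 1 f * (M₂ / Real.log 2) + zNorm 1 f * M₂ + 6 * zNorm 1 f * M₁ := by
          apply add_le_add (add_le_add ?_ ?_) (le_refl _)
          · exact mul_le_mul_of_nonneg_left hG1 hMf0
          · apply mul_le_mul_of_nonneg_left _ hMf0
            calc (1 - ‖z‖ ^ 2) ^ β * ‖deriv g (φ z) * (deriv φ z) ^ 2‖
                * Real.log (2 / (1 - ‖φ z‖ ^ 2))
                = (1 - ‖z‖ ^ 2) ^ β * Real.log (2 / (1 - ‖φ z‖ ^ 2))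
                  * ‖deriv g (φ z) * (deriv φ z) ^ 2‖ := by ring
              _ ≤ M₂ := hM₂ z hz
      _ = zNorm 1 f * K := by rw [hK_def]; ring
  -- constants for the values at 0
  have hφ0 : φ 0 ∈ uD := hφm zero_uD
  obtain ⟨Dg, hDg⟩ := (isCompact_closedBall (0:ℂ) ‖φ 0‖).exists_bound_of_continuousOn
      ((hg'.deriv.continuousOn).mono (closedBall_subset_uD (mem_uD.mp hφ0)))
  have hDg0 : 0 ≤ Dg :=
    le_trans (norm_nonneg _) (hDg 0 (Metric.mem_closedBall_self (norm_nonneg _)))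
  set Cg : ℝ := ‖deriv g (φ 0)‖ * ‖deriv φ 0‖ with hCg_def
  have hCg0 : 0 ≤ Cg := mul_nonneg (norm_nonneg _) (norm_nonneg _)
  constructor
  · intro f hf
    exact ⟨(CphiUg_analytic hφ' hφm hg' (memZ_analyticOnNhd hf)).analyticOn,
      ⟨zNorm 1 f * K, main f hf⟩⟩
  · refine ⟨6*Dg + 6*Cg + K + 1, by linarith, fun f hf => ?_⟩
    have hfA : AnalyticOnNhd ℂ f uD := memZ_analyticOnNhd hf
    have hMf := memZ_one_bound hf
    obtain ⟨Mb, hMb⟩ := hf.2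
    have hMf0 : 0 ≤ zNorm 1 f := zNorm_nonneg hf.2
    have hfv : ∀ w ∈ uD, ‖f w‖ ≤ 6 * zNorm 1 f := by
      intro w hw
      have h1 := value_growth hfA hMf hw
      have h2 := norm_f0_le_zNorm hMb
      have h3 := norm_df0_le_zNorm hMb
      linarith
    have h1 : zNorm β (CphiUg g φ f) ≤ ‖CphiUg g φ f 0‖ + ‖deriv (CphiUg g φ f) 0‖
        + zNorm 1 f * K := zNorm_le (main f hf)
    have h2 : ‖deriv (CphiUg g φ f) 0‖ ≤ 6 * zNorm 1 f * Cg := by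
      rw [CphiUg_deriv hφ' hφm hg' hfA zero_uD]
      rw [norm_mul (f (φ 0) * deriv g (φ 0)) _, norm_mul (f (φ 0)) _]
      calc ‖f (φ 0)‖ * ‖deriv g (φ 0)‖ * ‖deriv φ 0‖
          = ‖f (φ 0)‖ * (‖deriv g (φ 0)‖ * ‖deriv φ 0‖) := by ring
        _ ≤ (6 * zNorm 1 f) * (‖deriv g (φ 0)‖ * ‖deriv φ 0‖) := by
            apply mul_le_mul_of_nonneg_right (hfv _ hφ0) (by positivity)
        _ = 6 * zNorm 1 f * Cg := by rw [hCg_def]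
    have h3 : ‖CphiUg g φ f 0‖ ≤ 6 * zNorm 1 f * Dg := by
      have hrfl : CphiUg g φ f 0
          = ∫ t in (0:ℝ)..1, φ 0 * (f ((t:ℂ) * φ 0) * deriv g ((t:ℂ) * φ 0)) := rfl
      rw [hrfl]
      have hpt : ∀ t ∈ Set.Ioc (0:ℝ) 1,
          ‖φ 0 * (f ((t:ℂ) * φ 0) * deriv g ((t:ℂ) * φ 0))‖ ≤ 6 * zNorm 1 f * Dg := by
        intro t ht
        have hmem : (t:ℂ)*φ 0 ∈ uD := smul_mem_uD hφ0 (le_of_lt ht.1) ht.2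
        have hmem2 : (t:ℂ)*φ 0 ∈ Metric.closedBall (0:ℂ) ‖φ 0‖ := by
          rw [Metric.mem_closedBall, dist_zero_right, norm_mul, Complex.norm_real,
            Real.norm_eq_abs, abs_of_nonneg (le_of_lt ht.1)]
          nlinarith [norm_nonneg (φ 0), ht.1, ht.2]
        calc ‖φ 0 * (f ((t:ℂ) * φ 0) * deriv g ((t:ℂ) * φ 0))‖
            = ‖φ 0‖ * (‖f ((t:ℂ) * φ 0)‖ * ‖deriv g ((t:ℂ) * φ 0)‖) := by
              rw [norm_mul, norm_mul]
          _ ≤ 1 * ((6 * zNorm 1 f) * Dg) := by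
              apply mul_le_mul (le_of_lt (mem_uD.mp hφ0)) _ (by positivity) zero_le_one
              exact mul_le_mul (hfv _ hmem) (hDg _ hmem2) (norm_nonneg _) (by linarith)
          _ = 6 * zNorm 1 f * Dg := by ring
      calc ‖∫ t in (0:ℝ)..1, φ 0 * (f ((t:ℂ) * φ 0) * deriv g ((t:ℂ) * φ 0))‖
          ≤ ∫ _t in (0:ℝ)..1, 6 * zNorm 1 f * Dg :=
            my_norm_integral_le hpt intervalIntegrable_const (fun t _ => by positivity)
        _ = 6 * zNorm 1 f * Dg := by
            rw [intervalIntegral.integral_const]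
            simp
    calc zNorm β (CphiUg g φ f)
        ≤ 6 * zNorm 1 f * Dg + 6 * zNorm 1 f * Cg + zNorm 1 f * K := by linarith
      _ = zNorm 1 f * (6*Dg + 6*Cg + K) := by ring
      _ ≤ zNorm 1 f * (6*Dg + 6*Cg + K + 1) :=
          mul_le_mul_of_nonneg_left (by linarith) hMf0
      _ = (6*Dg + 6*Cg + K + 1) * zNorm 1 f := by ring

lemma necessity {β : ℝ} (hβ : 0 < β)
    (hφ' : AnalyticOnNhd ℂ φ uD) (hφm : Set.MapsTo φ uD uD)
    (hg' : AnalyticOnNhd ℂ g uD) (h : boundedOp 1 β (CphiUg g φ)) :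
    memHv β (fun z => deriv g (φ z) * deriv (deriv φ) z
        + deriv (deriv g) (φ z) * (deriv φ z) ^ 2) ∧
      ∃ M : ℝ, ∀ z ∈ uD, (1 - ‖z‖ ^ 2) ^ β * Real.log (2 / (1 - ‖φ z‖ ^ 2)) *
        ‖deriv g (φ z) * (deriv φ z) ^ 2‖ ≤ M := by
  obtain ⟨hmap, C, hC, hbd⟩ := h
  -- Part 1 : test with the constant function 1
  have hconstA : AnalyticOnNhd ℂ (fun _ : ℂ => (1:ℂ)) uD := fun z _ => analyticAt_const
  have hconstZ : memZ 1 (fun _ : ℂ => (1:ℂ)) := by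
    refine ⟨hconstA.analyticOn, ⟨0, fun z _ => ?_⟩⟩
    unfold zygS
    simp
  obtain ⟨M₁, hM₁⟩ := (hmap _ hconstZ).2
  have hHv : ∀ z ∈ uD, (1 - ‖z‖ ^ 2) ^ β * ‖deriv g (φ z) * deriv (deriv φ) z
      + deriv (deriv g) (φ z) * (deriv φ z) ^ 2‖ ≤ M₁ := by
    intro z hz
    have h2 := CphiUg_deriv2 hφ' hφm hg' hconstA hz
    have hd0 : deriv (fun _ : ℂ => (1:ℂ)) (φ z) = 0 := by simp
    rw [hd0] at h2
    simp only [zero_mul, one_mul, zero_add] at h2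
    have h3 := hM₁ z hz
    unfold zygS at h3
    rw [h2] at h3
    exact h3
  have hM₁0 : 0 ≤ M₁ := le_trans (zygS_zero_nonneg β _) (hM₁ 0 zero_uD)
  refine ⟨⟨M₁, hHv⟩, ?_⟩
  -- Part 2
  have hlog4 : (0:ℝ) < Real.log 4 := Real.log_pos (by norm_num)
  refine ⟨Real.log 4 * (C + M₁) + (3*C + 7*M₁), fun z hz => ?_⟩
  have hw : φ z ∈ uD := hφm hz
  have hW0 : 0 ≤ (1 - ‖z‖ ^ 2) ^ β := weight_nonneg β hz
  have hLnn : 0 ≤ Real.log (2 / (1 - ‖φ z‖ ^ 2)) := by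
    apply Real.log_nonneg
    rw [le_div_iff₀ (one_sub_sq_pos hw)]
    nlinarith [norm_nonneg (φ z), one_sub_sq_pos hw]
  by_cases hcase : ‖φ z‖^2 ≤ 1/2
  · -- small |φ z| : test with the identity
    have hidA : AnalyticOnNhd ℂ (fun y : ℂ => y) uD := fun z _ => analyticAt_id
    have hdid : deriv (fun y : ℂ => y) = fun _ => (1:ℂ) := deriv_id''
    have hzygid : ∀ z' ∈ uD, zygS 1 (fun y : ℂ => y) z' ≤ 0 := by
      intro z' _
      unfold zygS
      rw [hdid, deriv_const]
      simp
    have hidZ : memZ 1 (fun y : ℂ => y) := ⟨hidA.analyticOn, ⟨0, hzygid⟩⟩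
    have hzn : zNorm 1 (fun y : ℂ => y) ≤ 1 := by
      have h := zNorm_le hzygid
      rw [hdid] at h
      simpa using h
    obtain ⟨MF, hMF⟩ := (hmap _ hidZ).2
    have hzygF : zygS β (CphiUg g φ (fun y : ℂ => y)) z ≤ C := by
      refine le_trans (zygS_le_zNorm hMF hz) (le_trans (hbd _ hidZ) ?_)
      nlinarith
    have hF2 := CphiUg_deriv2 hφ' hφm hg' hidA hz
    rw [hdid] at hF2
    simp only [one_mul] at hF2
    have hL4 : Real.log (2 / (1 - ‖φ z‖ ^ 2)) ≤ Real.log 4 := by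
      apply Real.log_le_log (div_pos two_pos (one_sub_sq_pos hw))
      rw [div_le_iff₀ (one_sub_sq_pos hw)]
      nlinarith
    have htri : ‖deriv g (φ z) * (deriv φ z) ^ 2‖
        ≤ ‖deriv (deriv (CphiUg g φ (fun y : ℂ => y))) z‖
          + ‖φ z‖ * ‖deriv g (φ z) * deriv (deriv φ) z
            + deriv (deriv g) (φ z) * (deriv φ z) ^ 2‖ := by
      have heq : deriv g (φ z) * (deriv φ z) ^ 2
          = deriv (deriv (CphiUg g φ (fun y : ℂ => y))) z
            - φ z * (deriv g (φ z) * deriv (deriv φ) z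
              + deriv (deriv g) (φ z) * (deriv φ z) ^ 2) := by
        rw [hF2]; ring
      calc ‖deriv g (φ z) * (deriv φ z) ^ 2‖
          = ‖deriv (deriv (CphiUg g φ (fun y : ℂ => y))) z
            - φ z * (deriv g (φ z) * deriv (deriv φ) z
              + deriv (deriv g) (φ z) * (deriv φ z) ^ 2)‖ := by rw [← heq]
        _ ≤ ‖deriv (deriv (CphiUg g φ (fun y : ℂ => y))) z‖
            + ‖φ z * (deriv g (φ z) * deriv (deriv φ) z
              + deriv (deriv g) (φ z) * (deriv φ z) ^ 2)‖ := norm_sub_le _ _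
        _ = ‖deriv (deriv (CphiUg g φ (fun y : ℂ => y))) z‖
            + ‖φ z‖ * ‖deriv g (φ z) * deriv (deriv φ) z
              + deriv (deriv g) (φ z) * (deriv φ z) ^ 2‖ := by rw [norm_mul]
    have hX : (1 - ‖z‖ ^ 2) ^ β * ‖deriv g (φ z) * (deriv φ z) ^ 2‖ ≤ C + M₁ := by
      have h1 := mul_le_mul_of_nonneg_left htri hW0
      have h2 : ‖φ z‖ * ((1 - ‖z‖ ^ 2) ^ β * ‖deriv g (φ z) * deriv (deriv φ) z
          + deriv (deriv g) (φ z) * (deriv φ z) ^ 2‖) ≤ 1 * M₁ :=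
        mul_le_mul (le_of_lt (mem_uD.mp hw)) (hHv z hz)
          (mul_nonneg hW0 (norm_nonneg _)) zero_le_one
      have h3 : (1 - ‖z‖ ^ 2) ^ β * ‖deriv (deriv (CphiUg g φ (fun y : ℂ => y))) z‖ ≤ C := by
        have := hzygF
        unfold zygS at this
        exact this
      calc (1 - ‖z‖ ^ 2) ^ β * ‖deriv g (φ z) * (deriv φ z) ^ 2‖
          ≤ (1 - ‖z‖ ^ 2) ^ β * (‖deriv (deriv (CphiUg g φ (fun y : ℂ => y))) z‖
            + ‖φ z‖ * ‖deriv g (φ z) * deriv (deriv φ) z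
              + deriv (deriv g) (φ z) * (deriv φ z) ^ 2‖) := h1
        _ = (1 - ‖z‖ ^ 2) ^ β * ‖deriv (deriv (CphiUg g φ (fun y : ℂ => y))) z‖
            + ‖φ z‖ * ((1 - ‖z‖ ^ 2) ^ β * ‖deriv g (φ z) * deriv (deriv φ) z
              + deriv (deriv g) (φ z) * (deriv φ z) ^ 2‖) := by ring
        _ ≤ C + 1 * M₁ := add_le_add h3 h2
        _ = C + M₁ := by ring
    calc (1 - ‖z‖ ^ 2) ^ β * Real.log (2 / (1 - ‖φ z‖ ^ 2))
          * ‖deriv g (φ z) * (deriv φ z) ^ 2‖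
        = Real.log (2 / (1 - ‖φ z‖ ^ 2))
          * ((1 - ‖z‖ ^ 2) ^ β * ‖deriv g (φ z) * (deriv φ z) ^ 2‖) := by ring
      _ ≤ Real.log 4 * (C + M₁) :=
          mul_le_mul hL4 hX (mul_nonneg hW0 (norm_nonneg _)) (le_of_lt hlog4)
      _ ≤ Real.log 4 * (C + M₁) + (3*C + 7*M₁) := by linarith
  · -- large |φ z| : test with the log test function
    have hhalf : 1/2 < ‖φ z‖^2 := not_le.mp hcase
    obtain ⟨fw, hanal, hzyg2, hfw0, hdfw0, hdfww, hfwwB⟩ := test_fn (φ z) hw hhalf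
    have hzygfw : ∀ z' ∈ uD, zygS 1 fw z' ≤ 2 := by
      intro z' hz'
      rw [zygS_one_eq]
      exact hzyg2 z' hz'
    have hfwZ : memZ 1 fw := ⟨hanal.analyticOn, ⟨2, hzygfw⟩⟩
    have hzn : zNorm 1 fw ≤ 3 := by
      have h := zNorm_le hzygfw
      rw [hfw0] at h
      rw [norm_zero] at h
      linarith
    obtain ⟨MF, hMF⟩ := (hmap _ hfwZ).2
    have hzygF : zygS β (CphiUg g φ fw) z ≤ 3*C := by
      refine le_trans (zygS_le_zNorm hMF hz) (le_trans (hbd _ hfwZ) ?_)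
      nlinarith
    have hF2 := CphiUg_deriv2 hφ' hφm hg' hanal hz
    have htri : ‖deriv fw (φ z) * (deriv g (φ z) * (deriv φ z) ^ 2)‖
        ≤ ‖deriv (deriv (CphiUg g φ fw)) z‖
          + ‖fw (φ z)‖ * ‖deriv g (φ z) * deriv (deriv φ) z
            + deriv (deriv g) (φ z) * (deriv φ z) ^ 2‖ := by
      have heq : deriv fw (φ z) * (deriv g (φ z) * (deriv φ z) ^ 2)
          = deriv (deriv (CphiUg g φ fw)) z
            - fw (φ z) * (deriv g (φ z) * deriv (deriv φ) z
              + deriv (deriv g) (φ z) * (deriv φ z) ^ 2) := by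
        rw [hF2]; ring
      calc ‖deriv fw (φ z) * (deriv g (φ z) * (deriv φ z) ^ 2)‖
          = ‖deriv (deriv (CphiUg g φ fw)) z
            - fw (φ z) * (deriv g (φ z) * deriv (deriv φ) z
              + deriv (deriv g) (φ z) * (deriv φ z) ^ 2)‖ := by rw [← heq]
        _ ≤ ‖deriv (deriv (CphiUg g φ fw)) z‖
            + ‖fw (φ z) * (deriv g (φ z) * deriv (deriv φ) z
              + deriv (deriv g) (φ z) * (deriv φ z) ^ 2)‖ := norm_sub_le _ _
        _ = ‖deriv (deriv (CphiUg g φ fw)) z‖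
            + ‖fw (φ z)‖ * ‖deriv g (φ z) * deriv (deriv φ) z
              + deriv (deriv g) (φ z) * (deriv φ z) ^ 2‖ := by rw [norm_mul]
    have h2 : ‖fw (φ z)‖ * ((1 - ‖z‖ ^ 2) ^ β * ‖deriv g (φ z) * deriv (deriv φ) z
        + deriv (deriv g) (φ z) * (deriv φ z) ^ 2‖) ≤ 7 * M₁ :=
      mul_le_mul hfwwB (hHv z hz) (mul_nonneg hW0 (norm_nonneg _)) (by norm_num)
    have h3 : (1 - ‖z‖ ^ 2) ^ β * ‖deriv (deriv (CphiUg g φ fw)) z‖ ≤ 3*C := by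
      have := hzygF
      unfold zygS at this
      exact this
    calc (1 - ‖z‖ ^ 2) ^ β * Real.log (2 / (1 - ‖φ z‖ ^ 2))
          * ‖deriv g (φ z) * (deriv φ z) ^ 2‖
        = (1 - ‖z‖ ^ 2) ^ β * (‖deriv fw (φ z)‖ * ‖deriv g (φ z) * (deriv φ z) ^ 2‖) := by
          rw [hdfww]; ring
      _ = (1 - ‖z‖ ^ 2) ^ β * ‖deriv fw (φ z) * (deriv g (φ z) * (deriv φ z) ^ 2)‖ := by
          rw [norm_mul (deriv fw (φ z)) _]
      _ ≤ (1 - ‖z‖ ^ 2) ^ β * (‖deriv (deriv (CphiUg g φ fw)) z‖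
          + ‖fw (φ z)‖ * ‖deriv g (φ z) * deriv (deriv φ) z
            + deriv (deriv g) (φ z) * (deriv φ z) ^ 2‖) :=
          mul_le_mul_of_nonneg_left htri hW0
      _ = (1 - ‖z‖ ^ 2) ^ β * ‖deriv (deriv (CphiUg g φ fw)) z‖
          + ‖fw (φ z)‖ * ((1 - ‖z‖ ^ 2) ^ β * ‖deriv g (φ z) * deriv (deriv φ) z
            + deriv (deriv g) (φ z) * (deriv φ z) ^ 2‖) := by ring
      _ ≤ 3*C + 7*M₁ := add_le_add h3 h2
      _ ≤ Real.log 4 * (C + M₁) + (3*C + 7*M₁) := by nlinarith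

end main

theorem stmt_7 (α β : ℝ) (hα : α = 1) (hβ : 0 < β)
    (φ g : ℂ → ℂ) (hφ : AnalyticOn ℂ φ uD) (hφm : Set.MapsTo φ uD uD)
    (hg : AnalyticOn ℂ g uD) :
    boundedOp 1 β (CphiUg g φ) ↔
      (memHv β (fun z => deriv g (φ z) * deriv (deriv φ) z + deriv (deriv g) (φ z) * (deriv φ z) ^ 2) ∧ (∃ M : ℝ, ∀ z ∈ uD, (1 - ‖z‖ ^ 2) ^ β * Real.log (2 / (1 - ‖φ z‖ ^ 2)) * ‖deriv g (φ z) * (deriv φ z) ^ 2‖ ≤ M)) := by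
  have hφ' : AnalyticOnNhd ℂ φ uD := (uD_open.analyticOn_iff_analyticOnNhd).mp hφ
  have hg' : AnalyticOnNhd ℂ g uD := (uD_open.analyticOn_iff_analyticOnNhd).mp hg
  constructor
  · intro h
    exact necessity hβ hφ' hφm hg' h
  · rintro ⟨⟨M₁, hM₁⟩, ⟨M₂, hM₂⟩⟩
    exact sufficiency hβ hφ' hφm hg' hM₁ hM₂
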